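/- For all real t with 0 < t ≤ 1 and all v with 0 ≤ v ≤ 1, exp(v·(1-v)·(t-1)²/2) ≤ ((1-v) + v·t)/t^v. -/

import Mathlib

open Real

theorem stmt2 (t v : ℝ) (ht0 : 0 < t) (ht1 : t ≤ 1) (hv0 : 0 ≤ v) (hv1 : v ≤ 1) :
    Real.exp (v * (1 - v) * (t - 1) ^ 2 / 2) ≤ ((1 - v) + v * t) / t ^ v := by
  set f : ℝ → ℝ := fun s =>
    Real.log (1 - v + v * s) - v * Real.log s - v * (1 - v) * (s - 1) ^ 2 / 2 with hf
  have hA : ∀ s : ℝ, 0 < s → s ≤ 1 → 0 < 1 - v + v * s := fun s hs hs1 => by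
    nlinarith [mul_nonneg (sub_nonneg.2 hv1) (sub_nonneg.2 hs1)]
  have hderiv : ∀ s : ℝ, 0 < s → s ≤ 1 →
      HasDerivAt f (v / (1 - v + v * s) - v / s - v * (1 - v) * (s - 1)) s := by
    intro s hs hs1
    have hA' := hA s hs hs1
    have h1 : HasDerivAt (fun s : ℝ => 1 - v + v * s) v s := by
      simpa using ((hasDerivAt_id s).const_mul v).const_add (1 - v)
    have h2 : HasDerivAt (fun s : ℝ => Real.log (1 - v + v * s)) (v / (1 - v + v * s)) s := by
      have := (Real.hasDerivAt_log hA'.ne').comp s h1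
      simpa [div_eq_inv_mul, Function.comp_def] using this
    have h3 : HasDerivAt (fun s : ℝ => v * Real.log s) (v / s) s := by
      simpa [div_eq_inv_mul, mul_comm] using (Real.hasDerivAt_log hs.ne').const_mul v
    have h4 : HasDerivAt (fun s : ℝ => v * (1 - v) * (s - 1) ^ 2 / 2)
        (v * (1 - v) * (s - 1)) s := by
      have h5 := ((((hasDerivAt_id s).sub_const 1).pow 2).const_mul (v * (1 - v))).div_const 2
      convert h5 using 1
      · rfl
      · rfl
      · funext x
        simp only [Pi.pow_apply, id_eq]
      · simp only [id_eq]
        norm_num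
        ring
    exact (h2.sub h3).sub h4
  have hmono : AntitoneOn f (Set.Icc t 1) := by
    apply antitoneOn_of_deriv_nonpos (convex_Icc t 1)
    · intro s hs
      exact (hderiv s (lt_of_lt_of_le ht0 hs.1) hs.2).continuousAt.continuousWithinAt
    · intro s hs
      rw [interior_Icc] at hs
      exact (hderiv s (ht0.trans hs.1) hs.2.le).differentiableAt.differentiableWithinAt
    · intro s hs
      rw [interior_Icc] at hs
      have hs0 : 0 < s := ht0.trans hs.1
      have hs1 : s ≤ 1 := hs.2.le
      rw [(hderiv s hs0 hs1).deriv]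
      have hA' := hA s hs0 hs1
      have hAs : (1 - v + v * s) * s ≤ 1 := by nlinarith
      have hrw : v / (1 - v + v * s) - v / s - v * (1 - v) * (s - 1)
          = v * (1 - v) * (s - 1) * (1 - (1 - v + v * s) * s) / ((1 - v + v * s) * s) := by
        field_simp
        ring
      rw [hrw]
      apply div_nonpos_of_nonpos_of_nonneg
      · apply mul_nonpos_of_nonpos_of_nonneg
        · exact mul_nonpos_of_nonneg_of_nonpos (mul_nonneg hv0 (sub_nonneg.2 hv1))
            (sub_nonpos.2 hs1)
        · linarith
      · positivity
  have hf1 : f 1 = 0 := by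
    have e1 : (1 : ℝ) - v + v * 1 = 1 := by ring
    simp [hf, e1]
  have h0 : 0 ≤ f t := by
    have := hmono (Set.left_mem_Icc.2 ht1) (Set.right_mem_Icc.2 ht1) ht1
    rw [hf1] at this
    exact this
  have hkey : v * (1 - v) * (t - 1) ^ 2 / 2 ≤ Real.log (1 - v + v * t) - v * Real.log t := by
    simp only [hf] at h0; linarith
  calc Real.exp (v * (1 - v) * (t - 1) ^ 2 / 2)
      ≤ Real.exp (Real.log (1 - v + v * t) - v * Real.log t) := Real.exp_le_exp.2 hkey
    _ = (1 - v + v * t) / t ^ v := by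
        rw [Real.exp_sub, Real.exp_log (hA t ht0 ht1), Real.rpow_def_of_pos ht0,
          mul_comm v (Real.log t)]
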